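/- arXiv:2004.07630 — 5 statements merged into one kernel-verified Lean document; each statement's English description precedes it below -/
import Mathlib

section
/- For every r ≥ 1 and every vertex ordering ≺ of a graph with at least r^3 designated pairs of vertices (each pair consisting of two distinct vertices, and all pairs pairwise disjoint), one can identify r of these pairs that form either an r-rainbow, an r-twist, or an r-necklace in ≺. -/
open Finset

namespace Stmt4Aux

variable {n : ℕ}

/-- Length of the longest consecutive `R`-chain inside `S` ending at `i`. -/
def rho (S : Finset (Fin n)) (R : Fin n → Fin n → Prop) [DecidableRel R] (i : Fin n) : ℕ :=
  ((S.filter fun j => j < i ∧ R j i).attach.sup fun j => rho S R j.1) + 1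
termination_by i.1
decreasing_by
  exact (Finset.mem_filter.mp j.2).2.1

lemma rho_pos (S : Finset (Fin n)) (R : Fin n → Fin n → Prop) [DecidableRel R] (i : Fin n) :
    1 ≤ rho S R i := by
  rw [rho]; omega

lemma rho_lt (S : Finset (Fin n)) (R : Fin n → Fin n → Prop) [DecidableRel R]
    {i j : Fin n} (hj : j ∈ S) (hji : j < i) (hR : R j i) :
    rho S R j < rho S R i := by
  conv_rhs => rw [rho]
  have hmem : j ∈ S.filter fun j => j < i ∧ R j i := Finset.mem_filter.mpr ⟨hj, hji, hR⟩
  have h0 := Finset.le_sup (f := fun j : {x // x ∈ S.filter fun j => j < i ∧ R j i} => rho S R j.1)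
    (Finset.mem_attach _ ⟨j, hmem⟩)
  have h : rho S R j ≤ (S.filter fun j => j < i ∧ R j i).attach.sup
      fun j : {x // x ∈ S.filter fun j => j < i ∧ R j i} => rho S R j.1 := h0
  omega

lemma exists_chain (S : Finset (Fin n)) (R : Fin n → Fin n → Prop) [DecidableRel R] (i : Fin n) :
    ∃ c : Fin (rho S R i) → Fin n, StrictMono c ∧ (∀ a, c a ∈ S ∨ c a = i) ∧
      (∀ a b : Fin (rho S R i), (a : ℕ) + 1 = b → R (c a) (c b)) ∧
      ∀ a : Fin (rho S R i), (a : ℕ) = rho S R i - 1 → c a = i := by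
  suffices H : ∀ N, ∀ i : Fin n, (i : ℕ) < N →
      ∃ c : Fin (rho S R i) → Fin n, StrictMono c ∧ (∀ a, c a ∈ S ∨ c a = i) ∧
      (∀ a b : Fin (rho S R i), (a : ℕ) + 1 = b → R (c a) (c b)) ∧
      ∀ a : Fin (rho S R i), (a : ℕ) = rho S R i - 1 → c a = i from H n i i.isLt
  intro N
  induction N with
  | zero => exact fun i hi => absurd hi (by omega)
  | succ N IH =>
    intro i hi
    rcases (S.filter fun j => j < i ∧ R j i).eq_empty_or_nonempty with h | h
    · have h1 : rho S R i = 1 := by rw [rho, h]; simp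
      refine ⟨fun _ => i, ?_, fun _ => Or.inr rfl, ?_, fun _ _ => rfl⟩
      · intro a b hab
        exfalso
        have ha := a.isLt; have hb := b.isLt
        have := Fin.lt_def.mp hab
        omega
      · intro a b hab
        exfalso
        have hb := b.isLt
        omega
    · obtain ⟨j', hj'mem, hsup⟩ :=
        Finset.exists_mem_eq_sup ((S.filter fun j => j < i ∧ R j i).attach)
          (Finset.attach_nonempty_iff.mpr h) (fun j => rho S R j.1)
      have hjF := j'.2
      rw [Finset.mem_filter] at hjF
      obtain ⟨hjS, hji, hRji⟩ := hjF
      set j := j'.1 with hjdef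
      have hrho : rho S R i = rho S R j + 1 := by rw [rho, hsup]
      obtain ⟨c, hmono, hmem, hcons, hlast⟩ := IH j (by
        have := Fin.lt_def.mp hji; omega)
      have hj1 : 1 ≤ rho S R j := rho_pos S R j
      have hcL : c ⟨rho S R j - 1, by omega⟩ = j := hlast _ rfl
      have hle : ∀ x : Fin (rho S R j), c x ≤ j := by
        intro x
        have : x ≤ (⟨rho S R j - 1, by omega⟩ : Fin (rho S R j)) := by
          rw [Fin.le_def]; have := x.isLt; simp; omega
        calc c x ≤ c ⟨rho S R j - 1, by omega⟩ := hmono.monotone this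
          _ = j := hcL
      have hlti : ∀ x : Fin (rho S R j), c x < i := fun x => lt_of_le_of_lt (hle x) hji
      refine ⟨fun a => if hh : (a : ℕ) < rho S R j then c ⟨a, hh⟩ else i, ?_, ?_, ?_, ?_⟩
      · intro a b hab
        have ha := a.isLt; have hb := b.isLt
        have hab' := Fin.lt_def.mp hab
        show (if hh : (a : ℕ) < rho S R j then c ⟨a, hh⟩ else i) <
          (if hh : (b : ℕ) < rho S R j then c ⟨b, hh⟩ else i)
        split_ifs with h1 h2 h2
        · exact hmono (Fin.mk_lt_mk.mpr hab')
        · exact hlti _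
        · exfalso; omega
        · exfalso; omega
      · intro a
        show (if hh : (a : ℕ) < rho S R j then c ⟨a, hh⟩ else i) ∈ S ∨
          (if hh : (a : ℕ) < rho S R j then c ⟨a, hh⟩ else i) = i
        split_ifs with h1
        · rcases hmem ⟨a, h1⟩ with h | h
          · exact Or.inl h
          · left; rw [h]; exact hjS
        · exact Or.inr rfl
      · intro a b hab
        have hb := b.isLt
        show R (if hh : (a : ℕ) < rho S R j then c ⟨a, hh⟩ else i)
          (if hh : (b : ℕ) < rho S R j then c ⟨b, hh⟩ else i)
        split_ifs with h1 h2 h2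
        · exact hcons ⟨a, h1⟩ ⟨b, h2⟩ hab
        · have hcj : c ⟨a, h1⟩ = j := hlast ⟨a, h1⟩ (by simp; omega)
          rw [hcj]; exact hRji
        · exfalso; omega
        · exfalso; omega
      · intro a ha
        show (if hh : (a : ℕ) < rho S R j then c ⟨a, hh⟩ else i) = i
        rw [dif_neg (by omega)]

lemma chain_or_antichain (S : Finset (Fin n)) (hS : S.Nonempty)
    (R : Fin n → Fin n → Prop) [DecidableRel R] (r m : ℕ) (hr : 1 ≤ r)
    (hcard : (r - 1) * m ≤ S.card) :
    (∃ c : Fin r → Fin n, StrictMono c ∧ (∀ a, c a ∈ S) ∧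
      ∀ a b : Fin r, (a : ℕ) + 1 = b → R (c a) (c b)) ∨
    (∃ T : Finset (Fin n), T ⊆ S ∧ m ≤ T.card ∧
      ∀ i ∈ T, ∀ j ∈ T, i < j → ¬ R i j) := by
  by_cases hex : ∃ i ∈ S, r ≤ rho S R i
  · left
    obtain ⟨i, hiS, hir⟩ := hex
    obtain ⟨c, hmono, hmem, hcons, hlast⟩ := exists_chain S R i
    refine ⟨fun a => c ⟨a + (rho S R i - r), by have := a.isLt; omega⟩, ?_, ?_, ?_⟩
    · intro a b hab
      exact hmono (Fin.mk_lt_mk.mpr (by have := Fin.lt_def.mp hab; omega))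
    · intro a
      dsimp only
      rcases hmem ⟨a + (rho S R i - r), by have := a.isLt; omega⟩ with h | h
      · exact h
      · rw [h]; exact hiS
    · intro a b hab
      exact hcons _ _ (by simp; omega)
  · right
    push_neg at hex
    rcases eq_or_lt_of_le hr with h1 | h1
    · exfalso
      obtain ⟨i, hiS⟩ := hS
      have h2 := hex i hiS
      have h3 := rho_pos S R i
      omega
    · have hmaps : ∀ i ∈ S, rho S R i ∈ Finset.Icc 1 (r - 1) := fun i hi =>
        Finset.mem_Icc.mpr ⟨rho_pos S R i, by have := hex i hi; omega⟩
      have hne : (Finset.Icc 1 (r - 1)).Nonempty := ⟨1, Finset.mem_Icc.mpr ⟨le_refl _, by omega⟩⟩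
      have hcard' : (Finset.Icc 1 (r - 1)).card * m ≤ S.card := by
        rw [Nat.card_Icc]
        have : r - 1 + 1 - 1 = r - 1 := by omega
        rw [this]; exact hcard
      obtain ⟨v, _, hvcard⟩ :=
        Finset.exists_le_card_fiber_of_mul_le_card_of_maps_to hmaps hne hcard'
      refine ⟨S.filter fun i => rho S R i = v, Finset.filter_subset _ _, hvcard, ?_⟩
      intro i hi j hj hij hR
      rw [Finset.mem_filter] at hi hj
      have := rho_lt S R hi.1 hij hR
      omega

lemma strictMono_of_consec {α : Type*} [Preorder α] {r : ℕ} {f : Fin r → α}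
    (h : ∀ a b : Fin r, (a : ℕ) + 1 = b → f a < f b) : StrictMono f := by
  cases r with
  | zero => exact fun a => a.elim0
  | succ r => exact Fin.strictMono_iff_lt_succ.mpr fun i => h i.castSucc i.succ (by simp)

lemma strictAnti_of_consec {α : Type*} [Preorder α] {r : ℕ} {f : Fin r → α}
    (h : ∀ a b : Fin r, (a : ℕ) + 1 = b → f b < f a) : StrictAnti f := by
  cases r with
  | zero => exact fun a => a.elim0
  | succ r => exact Fin.strictAnti_iff_succ_lt.mpr fun i => h i.castSucc i.succ (by simp)

end Stmt4Aux

open Stmt4Aux in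
/-- For every `r ≥ 1` and every vertex ordering of a graph with at least `r ^ 3`
designated pairwise disjoint pairs of vertices `⟨s i, t i⟩` (with `s i ≺ t i`),
one can identify `r` pairs forming an `r`-rainbow
(`s_1 ≺ ⋯ ≺ s_r ≺ t_r ≺ ⋯ ≺ t_1`), an `r`-twist
(`s_1 ≺ ⋯ ≺ s_r ≺ t_1 ≺ ⋯ ≺ t_r`), or an `r`-necklace
(`s_1 ≺ t_1 ≺ ⋯ ≺ s_r ≺ t_r`). -/
theorem stmt_4 {V : Type*} [LinearOrder V] (r n : ℕ) (hr : 1 ≤ r)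
    (hn : r ^ 3 ≤ n) (s t : Fin n → V) (hst : ∀ i, s i < t i)
    (hdisj : ∀ i j : Fin n, i ≠ j →
      s i ≠ s j ∧ s i ≠ t j ∧ t i ≠ s j ∧ t i ≠ t j) :
    ∃ σ : Fin r → Fin n, Function.Injective σ ∧
      ((StrictMono (fun i => s (σ i)) ∧ StrictAnti (fun i => t (σ i))) ∨
       (StrictMono (fun i => s (σ i)) ∧ StrictMono (fun i => t (σ i)) ∧
         ∀ i j : Fin r, s (σ i) < t (σ j)) ∨
       (∀ i j : Fin r, i < j → t (σ i) < s (σ j))) := by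
  classical
  have hsinj : Function.Injective s := by
    intro i j hij
    by_contra h
    exact (hdisj i j h).1 hij
  set π := Tuple.sort s with hπ
  have hmono : StrictMono (s ∘ π) :=
    (Tuple.monotone_sort s).strictMono_of_injective (hsinj.comp π.injective)
  have hd' : ∀ i j : Fin n, i ≠ j →
      s (π i) ≠ s (π j) ∧ s (π i) ≠ t (π j) ∧ t (π i) ≠ s (π j) ∧ t (π i) ≠ t (π j) :=
    fun i j h => hdisj _ _ fun hh => h (π.injective hh)
  have hr3 : 1 ≤ r ^ 3 := Nat.one_le_pow _ _ hr
  have hn0 : 0 < n := by omega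
  have hcube : r * (r * r) = r ^ 3 := by ring
  have hn1 : (r - 1) * (r * r) ≤ (Finset.univ : Finset (Fin n)).card := by
    rw [Finset.card_univ, Fintype.card_fin]
    have h1 : (r - 1) * (r * r) ≤ r * (r * r) := Nat.mul_le_mul_right _ (by omega)
    omega
  rcases chain_or_antichain Finset.univ ⟨⟨0, hn0⟩, Finset.mem_univ _⟩
      (fun i j => t (π j) < t (π i)) r (r * r) hr hn1 with
    ⟨c, hcmono, -, hccons⟩ | ⟨T, -, hTcard, hTanti⟩
  · -- rainbow
    refine ⟨fun a => π (c a), π.injective.comp hcmono.injective, Or.inl ⟨?_, ?_⟩⟩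
    · exact fun a b hab => hmono (hcmono hab)
    · exact strictAnti_of_consec fun a b hab => hccons a b hab
  · -- on T, both s∘π and t∘π are increasing
    have hTinc : ∀ i ∈ T, ∀ j ∈ T, i < j → t (π i) < t (π j) := by
      intro i hi j hj hij
      have h1 := hTanti i hi j hj hij
      have hne : t (π i) ≠ t (π j) := (hd' i j (ne_of_lt hij)).2.2.2
      exact lt_of_le_of_ne (not_lt.mp h1) hne
    have hT2 : (r - 1) * r ≤ T.card := by
      have h1 : (r - 1) * r ≤ r * r := Nat.mul_le_mul_right _ (by omega)
      omega
    have hTne : T.Nonempty := Finset.card_pos.mp (by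
      have : 1 ≤ r * r := Nat.one_le_iff_ne_zero.mpr (by positivity)
      omega)
    rcases chain_or_antichain T hTne (fun i j => t (π i) < s (π j)) r r hr hT2 with
      ⟨c, hcmono, hcS, hccons⟩ | ⟨U, hUT, hUcard, hUanti⟩
    · -- necklace
      refine ⟨fun a => π (c a), π.injective.comp hcmono.injective, Or.inr (Or.inr ?_)⟩
      intro a b hab
      have hab' := Fin.lt_def.mp hab
      have hb1 : (a : ℕ) + 1 < r := by have := b.isLt; omega
      have h1 := hccons a ⟨(a : ℕ) + 1, hb1⟩ rfl
      have h2 : s (π (c ⟨(a : ℕ) + 1, hb1⟩)) ≤ s (π (c b)) := by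
        apply hmono.monotone
        apply hcmono.monotone
        rw [Fin.le_def]
        simpa using hab'
      exact lt_of_lt_of_le h1 h2
    · -- twist
      obtain ⟨W, hWU, hWcard⟩ := Finset.exists_subset_card_eq hUcard
      let e := W.orderIsoOfFin hWcard
      have hcW : ∀ a : Fin r, (e a : Fin n) ∈ W := fun a => (e a).2
      have hcU : ∀ a : Fin r, (e a : Fin n) ∈ U := fun a => hWU (hcW a)
      have hcT : ∀ a : Fin r, (e a : Fin n) ∈ T := fun a => hUT (hcU a)
      have hcmono : StrictMono fun a : Fin r => (e a : Fin n) :=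
        fun a b h => Subtype.coe_lt_coe.mpr (e.strictMono h)
      refine ⟨fun a => π (e a), π.injective.comp hcmono.injective,
        Or.inr (Or.inl ⟨?_, ?_, ?_⟩)⟩
      · exact fun a b hab => hmono (hcmono hab)
      · exact fun a b hab => hTinc _ (hcT a) _ (hcT b) (hcmono hab)
      · intro a b
        rcases lt_trichotomy a b with h | h | h
        · exact lt_trans (hmono (hcmono h)) (hst (π (e b)))
        · rw [h]; exact hst (π (e b))
        · have h1 := hUanti _ (hcU b) _ (hcU a) (hcmono h)
          have hne : s (π (e a)) ≠ t (π (e b)) :=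
            (hd' _ _ (hcmono h).ne').2.1
          exact lt_of_le_of_ne (not_lt.mp h1) hne
end

section
/- If r^2 + 1 pairwise disjoint pairs of vertices in a linear order have the property that every two of them form either a 2-twist or a 2-necklace (i.e., no two of them are nested), then r of them form an r-twist or r of them form an r-necklace. -/
/-- If `r ^ 2 + 1` pairwise disjoint pairs of vertices `⟨s i, t i⟩` (with
`s i ≺ t i`) in a linear order are such that no two of them are nested (so
every two form a 2-twist or a 2-necklace), then `r` of them form an `r`-twist
(`s_1 ≺ ⋯ ≺ s_r ≺ t_1 ≺ ⋯ ≺ t_r`) or `r` of them form an `r`-necklace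
(`s_1 ≺ t_1 ≺ ⋯ ≺ s_r ≺ t_r`). -/
theorem stmt_5 {V : Type*} [LinearOrder V] (r : ℕ)
    (s t : Fin (r ^ 2 + 1) → V) (hst : ∀ i, s i < t i)
    (hdisj : ∀ i j, i ≠ j → s i ≠ s j ∧ s i ≠ t j ∧ t i ≠ s j ∧ t i ≠ t j)
    (hnonnested : ∀ i j, i ≠ j → ¬(s i < s j ∧ t j < t i)) :
    ∃ σ : Fin r → Fin (r ^ 2 + 1), Function.Injective σ ∧
      ((StrictMono (fun i => s (σ i)) ∧ StrictMono (fun i => t (σ i)) ∧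
         ∀ i j : Fin r, s (σ i) < t (σ j)) ∨
       (∀ i j : Fin r, i < j → t (σ i) < s (σ j))) := by
  classical
  -- s is injective
  have hsinj : Function.Injective s := by
    intro i j hij
    by_contra h
    exact (hdisj i j h).1 hij
  -- sort by s
  set e : Equiv.Perm (Fin (r ^ 2 + 1)) := Tuple.sort s with he
  have hs' : StrictMono (s ∘ e) :=
    (Tuple.monotone_sort s).strictMono_of_injective (hsinj.comp e.injective)
  have hne : ∀ {k l : Fin (r ^ 2 + 1)}, k < l → e k ≠ e l := fun hkl h =>
    absurd (e.injective h) (ne_of_lt hkl)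
  have ht' : ∀ {k l : Fin (r ^ 2 + 1)}, k < l → t (e k) < t (e l) := by
    intro k l hkl
    have h1 := hnonnested (e k) (e l) (hne hkl)
    have h2 := (hdisj (e k) (e l) (hne hkl)).2.2.2
    have h3 : s (e k) < s (e l) := hs' hkl
    rcases lt_trichotomy (t (e k)) (t (e l)) with h | h | h
    · exact h
    · exact absurd h h2
    · exact absurd ⟨h3, h⟩ h1
  -- trichotomy: separate (t (e k) < s (e l)) or crossing (s (e l) < t (e k))
  have htri : ∀ {k l : Fin (r ^ 2 + 1)}, k < l →
      t (e k) < s (e l) ∨ s (e l) < t (e k) := by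
    intro k l hkl
    have h2 := (hdisj (e k) (e l) (hne hkl)).2.2.1
    rcases lt_trichotomy (t (e k)) (s (e l)) with h | h | h
    · exact Or.inl h
    · exact absurd h h2
    · exact Or.inr h
  -- chains ending at k
  set C : Fin (r ^ 2 + 1) → Finset (Finset (Fin (r ^ 2 + 1))) := fun k =>
    Finset.univ.filter (fun c => k ∈ c ∧ (∀ a ∈ c, a ≤ k) ∧
      ∀ a ∈ c, ∀ b ∈ c, a < b → t (e a) < s (e b)) with hC
  set f : Fin (r ^ 2 + 1) → ℕ := fun k => (C k).sup Finset.card with hf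
  have hCmem : ∀ k c, c ∈ C k ↔ (k ∈ c ∧ (∀ a ∈ c, a ≤ k) ∧
      ∀ a ∈ c, ∀ b ∈ c, a < b → t (e a) < s (e b)) := by
    intro k c
    simp [hC]
  have hsingle : ∀ k, ({k} : Finset (Fin (r ^ 2 + 1))) ∈ C k := by
    intro k
    rw [hCmem]
    refine ⟨Finset.mem_singleton_self k, ?_, ?_⟩
    · intro a ha; rw [Finset.mem_singleton] at ha; exact ha.le
    · intro a ha b hb hab
      rw [Finset.mem_singleton] at ha hb
      exact absurd (ha.trans hb.symm) (ne_of_lt hab)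
  have hone : ∀ k, 1 ≤ f k := by
    intro k
    have h := Finset.le_sup (f := Finset.card) (hsingle k)
    rw [Finset.card_singleton] at h
    exact h
  have hmax : ∀ k, ∃ c ∈ C k, c.card = f k := by
    intro k
    obtain ⟨c, hc, hcard⟩ := Finset.exists_mem_eq_sup (C k) ⟨_, hsingle k⟩ Finset.card
    exact ⟨c, hc, hcard.symm⟩
  -- if k < l are separate then f k < f l
  have hstep : ∀ k l : Fin (r ^ 2 + 1), k < l → t (e k) < s (e l) → f k < f l := by
    intro k l hkl hsep
    obtain ⟨c, hc, hcard⟩ := hmax k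
    rw [hCmem] at hc
    obtain ⟨hkc, hle, hchain⟩ := hc
    have hlnot : l ∉ c := fun h => absurd (hle l h) (not_le.mpr hkl)
    have hins : insert l c ∈ C l := by
      rw [hCmem]
      refine ⟨Finset.mem_insert_self l c, ?_, ?_⟩
      · intro a ha
        rcases Finset.mem_insert.mp ha with h | h
        · exact h.le
        · exact (hle a h).trans hkl.le
      · intro a ha b hb hab
        rcases Finset.mem_insert.mp ha with h | h
        · subst h
          rcases Finset.mem_insert.mp hb with h' | h'
          · exact absurd h' (ne_of_gt hab)
          · exact absurd (((hle b h').trans hkl.le).trans_lt hab) (lt_irrefl b)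
        · rcases Finset.mem_insert.mp hb with h' | h'
          · subst h'
            rcases eq_or_lt_of_le (hle a h) with h2 | h2
            · rw [h2]; exact hsep
            · calc t (e a) < s (e k) := hchain a h k hkc h2
                _ < t (e k) := hst (e k)
                _ < s (e b) := hsep
          · exact hchain a h b h' hab
    have hle2 := Finset.le_sup (f := Finset.card) hins
    calc f k = c.card := hcard.symm
      _ < (insert l c).card := by rw [Finset.card_insert_of_notMem hlnot]; omega
      _ ≤ f l := hle2
  by_cases hbig : ∃ k, r ≤ f k
  -- necklace case
  · obtain ⟨k, hk⟩ := hbig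
    obtain ⟨c, hc, hcard⟩ := hmax k
    rw [hCmem] at hc
    obtain ⟨B, hBc, hBcard⟩ := Finset.exists_subset_card_eq (hcard ▸ hk)
    set g := B.orderIsoOfFin hBcard with hg
    refine ⟨fun i => e (g i), ?_, Or.inr ?_⟩
    · intro i j hij
      exact (OrderIso.injective g) (Subtype.ext (e.injective hij))
    · intro i j hij
      have hlt : (g i : Fin (r ^ 2 + 1)) < (g j : Fin (r ^ 2 + 1)) :=
        (OrderIso.strictMono g) hij
      exact hc.2.2 _ (hBc (g i).2) _ (hBc (g j).2) hlt
  -- twist case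
  · push_neg at hbig
    have hr1 : 1 ≤ r := le_trans (hone ⟨0, Nat.succ_pos _⟩) (hbig _).le
    have hmaps : ∀ k ∈ (Finset.univ : Finset (Fin (r ^ 2 + 1))),
        f k ∈ Finset.Icc 1 (r - 1) := by
      intro k _
      rw [Finset.mem_Icc]
      exact ⟨hone k, by have := hbig k; omega⟩
    have hcount : (Finset.Icc 1 (r - 1)).card * r <
        (Finset.univ : Finset (Fin (r ^ 2 + 1))).card := by
      rw [Nat.card_Icc, Finset.card_univ, Fintype.card_fin]
      have h1 : r - 1 + 1 - 1 = r - 1 := by omega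
      rw [h1]
      nlinarith [Nat.sub_add_cancel hr1]
    obtain ⟨v, _, hv⟩ := Finset.exists_lt_card_fiber_of_mul_lt_card_of_maps_to hmaps hcount
    obtain ⟨B, hBA, hBcard⟩ := Finset.exists_subset_card_eq (le_of_lt hv)
    have hBval : ∀ k ∈ B, f k = v := by
      intro k hk
      have h := hBA hk
      rw [Finset.mem_filter] at h
      exact h.2
    -- elements of B pairwise cross
    have hcross : ∀ k ∈ B, ∀ l ∈ B, k < l → s (e l) < t (e k) := by
      intro k hk l hl hkl
      rcases htri hkl with h | h
      · have h2 := hstep k l hkl h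
        rw [hBval k hk, hBval l hl] at h2
        omega
      · exact h
    set g := B.orderIsoOfFin hBcard with hg
    refine ⟨fun i => e (g i), ?_, Or.inl ⟨?_, ?_, ?_⟩⟩
    · intro i j hij
      exact (OrderIso.injective g) (Subtype.ext (e.injective hij))
    · intro i j hij
      exact hs' ((OrderIso.strictMono g) hij : (g i : Fin (r ^ 2 + 1)) < g j)
    · intro i j hij
      exact ht' ((OrderIso.strictMono g) hij : (g i : Fin (r ^ 2 + 1)) < g j)
    · intro i j
      rcases lt_trichotomy ((g i : Fin (r ^ 2 + 1))) ((g j : Fin (r ^ 2 + 1))) with h | h | h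
      · calc s (e (g i)) < s (e (g j)) := hs' h
          _ < t (e (g j)) := hst _
      · show s (e (g i)) < t (e (g j))
        rw [h]; exact hst _
      · exact hcross _ (g j).2 _ (g i).2 h
end

section
/- The book thickness of the complete graph K_n on n vertices equals ⌈n/2⌉ for n ≥ 4. -/
/-- `pg` is a valid page assignment for the graph `G` with respect to the spine
order given by `f`: no two edges on the same page cross. -/
def ValidAssign {V : Type*} (f : V → ℕ) (G : SimpleGraph V) {k : ℕ}
    (pg : Sym2 V → Fin k) : Prop :=
  ∀ a b c d : V, G.Adj a b → G.Adj c d → f a < f b → f c < f d →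
    pg s(a, b) = pg s(c, d) →
    ¬((f a < f c ∧ f c < f b ∧ f b < f d) ∨ (f c < f a ∧ f a < f d ∧ f d < f b))

/-- `G` admits a `k`-page book embedding: a linear order of the vertices
(an injection into `ℕ`) together with an assignment of edges to `k` pages so
that no two edges on the same page cross. -/
def HasBookEmbedding {V : Type*} (G : SimpleGraph V) (k : ℕ) : Prop :=
  ∃ f : V → ℕ, Function.Injective f ∧ ∃ pg : Sym2 V → Fin k, ValidAssign f G pg

/-- The book thickness of `G`: the minimum number of pages over all book
embeddings of `G`. -/
noncomputable def bookThickness {V : Type*} (G : SimpleGraph V) : ℕ :=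
  sInf {k | HasBookEmbedding G k}

lemma chordBound (m : ℕ) : ∀ (S : Finset ℕ) (F : Finset (ℕ × ℕ)),
    S.card ≤ m →
    (∀ p ∈ F, p.1 ∈ S ∧ p.2 ∈ S ∧ p.1 < p.2) →
    (∀ p ∈ F, ∃ x ∈ S, p.1 < x ∧ x < p.2) →
    (∀ p ∈ F, ∃ x ∈ S, x < p.1 ∨ p.2 < x) →
    (∀ p ∈ F, ∀ q ∈ F, ¬(p.1 < q.1 ∧ q.1 < p.2 ∧ p.2 < q.2)) →
    F.card ≤ S.card - 3 := by
  induction m with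
  | zero =>
    intro S F hm h1 h2 h3 h4
    have hF : F = ∅ := by
      apply Finset.eq_empty_of_forall_notMem
      intro q hq
      have := (h1 q hq).1
      have hS : S = ∅ := Finset.card_eq_zero.mp (by omega)
      simp [hS] at this
    simp [hF]
  | succ m ih =>
    intro S F hm h1 h2 h3 h4
    rcases F.eq_empty_or_nonempty with rfl | hne
    · simp
    obtain ⟨p₀, hp₀, hmin⟩ := F.exists_min_image (fun p => p.2 - p.1) hne
    obtain ⟨hi, hj, hij⟩ := h1 p₀ hp₀
    obtain ⟨x, hxS, hix, hxj⟩ := h2 p₀ hp₀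
    obtain ⟨w, hwS, hw⟩ := h3 p₀ hp₀
    -- x is not an endpoint of any chord
    have hend : ∀ q ∈ F, q.1 ≠ x ∧ q.2 ≠ x := by
      intro q hq
      obtain ⟨hq1, hq2, hqlt⟩ := h1 q hq
      constructor
      · intro h
        by_cases hy : q.2 ≤ p₀.2
        · have := hmin q hq; omega
        · exact h4 p₀ hp₀ q hq ⟨by omega, by omega, by omega⟩
      · intro h
        by_cases hy : p₀.1 ≤ q.1
        · have := hmin q hq; omega
        · exact h4 q hq p₀ hp₀ ⟨by omega, by omega, by omega⟩
    -- S has at least 4 elements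
    have hS4 : 4 ≤ S.card := by
      have hsub : ({p₀.1, x, p₀.2, w} : Finset ℕ) ⊆ S := by
        intro y hy
        simp only [Finset.mem_insert, Finset.mem_singleton] at hy
        rcases hy with rfl | rfl | rfl | rfl <;> assumption
      have hcard : ({p₀.1, x, p₀.2, w} : Finset ℕ).card = 4 := by
        rw [Finset.card_insert_of_notMem (by simp; omega),
          Finset.card_insert_of_notMem (by simp; omega),
          Finset.card_insert_of_notMem (by simp; omega), Finset.card_singleton]
      calc 4 = ({p₀.1, x, p₀.2, w} : Finset ℕ).card := hcard.symm
        _ ≤ S.card := Finset.card_le_card hsub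
    set S' := S.erase x with hS'
    set F' := F.erase p₀ with hF'
    have hmemF : ∀ q ∈ F', q ∈ F := fun q hq => Finset.mem_of_mem_erase hq
    have key2 : ∀ q ∈ F', ∃ y ∈ S', q.1 < y ∧ y < q.2 := by
      intro q hq'
      have hq := hmemF q hq'
      have hne' : q ≠ p₀ := Finset.ne_of_mem_erase hq'
      obtain ⟨w₀, hw₀S, hw₀1, hw₀2⟩ := h2 q hq
      by_cases hwx : w₀ = x
      · subst hwx
        obtain ⟨hq1, hq2, hqlt⟩ := h1 q hq
        rcases lt_trichotomy q.1 p₀.1 with h | h | h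
        · exact ⟨p₀.1, Finset.mem_erase.mpr ⟨by omega, hi⟩, h, by omega⟩
        · have hq2j : p₀.2 < q.2 := by
            by_contra hle
            push_neg at hle
            have hm' := hmin q hq
            have : q.2 = p₀.2 := by omega
            exact hne' (Prod.ext (by omega) this)
          exact ⟨p₀.2, Finset.mem_erase.mpr ⟨by omega, hj⟩, by omega, hq2j⟩
        · exfalso
          have hnc := h4 p₀ hp₀ q hq
          have hm' := hmin q hq
          simp only [not_and, not_lt] at hnc
          omega
      · exact ⟨w₀, Finset.mem_erase.mpr ⟨hwx, hw₀S⟩, hw₀1, hw₀2⟩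
    have key3 : ∀ q ∈ F', ∃ y ∈ S', y < q.1 ∨ q.2 < y := by
      intro q hq'
      have hq := hmemF q hq'
      obtain ⟨w₀, hw₀S, hw₀⟩ := h3 q hq
      by_cases hwx : w₀ = x
      · subst hwx
        rcases hw₀ with h | h
        · exact ⟨p₀.1, Finset.mem_erase.mpr ⟨by omega, hi⟩, Or.inl (by omega)⟩
        · exact ⟨p₀.2, Finset.mem_erase.mpr ⟨by omega, hj⟩, Or.inr (by omega)⟩
      · exact ⟨w₀, Finset.mem_erase.mpr ⟨hwx, hw₀S⟩, hw₀⟩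
    have key1 : ∀ q ∈ F', q.1 ∈ S' ∧ q.2 ∈ S' ∧ q.1 < q.2 := by
      intro q hq'
      have hq := hmemF q hq'
      obtain ⟨hq1, hq2, hqlt⟩ := h1 q hq
      obtain ⟨he1, he2⟩ := hend q hq
      exact ⟨Finset.mem_erase.mpr ⟨he1, hq1⟩, Finset.mem_erase.mpr ⟨he2, hq2⟩, hqlt⟩
    have key4 : ∀ p ∈ F', ∀ q ∈ F', ¬(p.1 < q.1 ∧ q.1 < p.2 ∧ p.2 < q.2) :=
      fun p hp q hq => h4 p (hmemF p hp) q (hmemF q hq)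
    have hScard : S'.card = S.card - 1 := Finset.card_erase_of_mem hxS
    have hinst := ih S' F' (by omega) key1 key2 key3 key4
    have hFcard : F'.card = F.card - 1 := Finset.card_erase_of_mem hp₀
    omega

lemma cross_mod (n s t : ℕ) (h1 : s + 2 ≤ t) (h2 : t + 2 ≤ s + n)
    (hs : s < 2 * n) (ht : t < 2 * n) (hmod : s % n / 2 = t % n / 2) : False := by
  have hn : 0 < n := by omega
  have hs1 : s % n < n := Nat.mod_lt _ hn
  have ht1 : t % n < n := Nat.mod_lt _ hn
  have hs2 : s % n = s ∨ s % n + n = s := by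
    rcases Nat.lt_or_ge s n with h | h
    · exact Or.inl (Nat.mod_eq_of_lt h)
    · right
      have : s % n = (s - n) % n := by
        conv_lhs => rw [show s = s - n + n by omega]
        simp [Nat.add_mod_right]
      rw [this, Nat.mod_eq_of_lt (by omega)]
      omega
  have ht2 : t % n = t ∨ t % n + n = t := by
    rcases Nat.lt_or_ge t n with h | h
    · exact Or.inl (Nat.mod_eq_of_lt h)
    · right
      have : t % n = (t - n) % n := by
        conv_lhs => rw [show t = t - n + n by omega]
        simp [Nat.add_mod_right]
      rw [this, Nat.mod_eq_of_lt (by omega)]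
      omega
  omega

lemma upperBound (n : ℕ) (hn : 4 ≤ n) :
    HasBookEmbedding (⊤ : SimpleGraph (Fin n)) ((n + 1) / 2) := by
  refine ⟨Fin.val, Fin.val_injective, ?_⟩
  refine ⟨Sym2.lift ⟨fun a b => ⟨(a.val + b.val) % n / 2, ?_⟩, fun a b => ?_⟩, ?_⟩
  · have := Nat.mod_lt (a.val + b.val) (show 0 < n by omega)
    omega
  · apply Fin.ext
    simp [Nat.add_comm]
  · intro a b c d hab hcd h1 h2 hpg
    simp only [Sym2.lift_mk] at hpg
    have hpg' : (a.val + b.val) % n / 2 = (c.val + d.val) % n / 2 :=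
      congrArg Fin.val hpg
    have ha := a.isLt; have hb := b.isLt; have hc := c.isLt; have hd := d.isLt
    rintro (⟨u1, u2, u3⟩ | ⟨u1, u2, u3⟩)
    · exact cross_mod n (a.val + b.val) (c.val + d.val) (by omega) (by omega)
        (by omega) (by omega) hpg'
    · exact cross_mod n (c.val + d.val) (a.val + b.val) (by omega) (by omega)
        (by omega) (by omega) hpg'.symm

lemma lowerBound (n k : ℕ) (hn : 4 ≤ n) (f : Fin n → ℕ) (hf : Function.Injective f)
    (pg : Sym2 (Fin n) → Fin k) (hpg : ValidAssign f (⊤ : SimpleGraph (Fin n)) pg) :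
    (n + 1) / 2 ≤ k := by
  classical
  set S : Finset ℕ := Finset.univ.image f with hSdef
  have hScard : S.card = n := by
    rw [hSdef, Finset.card_image_of_injective _ hf, Finset.card_univ, Fintype.card_fin]
  set Inn : ℕ × ℕ → Prop := fun p =>
    (∃ x ∈ S, p.1 < x ∧ x < p.2) ∧ (∃ x ∈ S, x < p.1 ∨ p.2 < x) with hInn
  set A := (S ×ˢ S).filter (fun p => p.1 < p.2) with hA
  set B := (S ×ˢ S).filter (fun p => p.2 < p.1) with hB
  set D := (S ×ˢ S).filter (fun p => p.1 = p.2) with hD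
  have hAmem : ∀ p : ℕ × ℕ, p ∈ A ↔ (p.1 ∈ S ∧ p.2 ∈ S ∧ p.1 < p.2) := by
    intro p
    rw [hA, Finset.mem_filter, Finset.mem_product]
    tauto
  have hBmem : ∀ p : ℕ × ℕ, p ∈ B ↔ (p.1 ∈ S ∧ p.2 ∈ S ∧ p.2 < p.1) := by
    intro p
    rw [hB, Finset.mem_filter, Finset.mem_product]
    tauto
  have hDmem : ∀ p : ℕ × ℕ, p ∈ D ↔ (p.1 ∈ S ∧ p.2 ∈ S ∧ p.1 = p.2) := by
    intro p
    rw [hD, Finset.mem_filter, Finset.mem_product]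
    tauto
  -- counting all ordered pairs
  have hU : A ∪ B ∪ D = S ×ˢ S := by
    ext p
    rw [Finset.mem_union, Finset.mem_union, hAmem, hBmem, hDmem, Finset.mem_product]
    constructor
    · rintro ((h | h) | h) <;> exact ⟨h.1, h.2.1⟩
    · intro h
      rcases lt_trichotomy p.1 p.2 with hh | hh | hh
      · exact Or.inl (Or.inl ⟨h.1, h.2, hh⟩)
      · exact Or.inr ⟨h.1, h.2, hh⟩
      · exact Or.inl (Or.inr ⟨h.1, h.2, hh⟩)
  have hdAB : Disjoint A B := by
    rw [Finset.disjoint_left]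
    intro p hp hp'
    rw [hAmem] at hp; rw [hBmem] at hp'
    omega
  have hdABD : Disjoint (A ∪ B) D := by
    rw [Finset.disjoint_left]
    intro p hp hp'
    rw [Finset.mem_union, hAmem, hBmem] at hp; rw [hDmem] at hp'
    rcases hp with h | h <;> omega
  have hBA : B.card = A.card := by
    refine Finset.card_bij' (fun p _ => p.swap) (fun p _ => p.swap) ?_ ?_
      (fun p _ => by simp) (fun p _ => by simp)
    · intro p hp
      rw [hBmem] at hp
      rw [hAmem]
      exact ⟨hp.2.1, hp.1, hp.2.2⟩
    · intro p hp
      rw [hAmem] at hp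
      rw [hBmem]
      exact ⟨hp.2.1, hp.1, hp.2.2⟩
  have hDS : D.card = S.card := by
    refine Finset.card_bij' (fun p _ => p.1) (fun s _ => (s, s)) ?_ ?_ ?_ ?_
    · intro p hp
      exact ((hDmem p).mp hp).1
    · intro s hs
      exact (hDmem (s, s)).mpr ⟨hs, hs, rfl⟩
    · intro p hp
      exact Prod.ext rfl ((hDmem p).mp hp).2.2
    · intro s _
      rfl
  have hAcard : 2 * A.card + S.card = S.card * S.card := by
    have h1 : (A ∪ B ∪ D).card = (S ×ˢ S).card := by rw [hU]
    rw [Finset.card_union_of_disjoint hdABD, Finset.card_union_of_disjoint hdAB,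
      Finset.card_product] at h1
    omega
  -- non-inner pairs are few
  set N := A.filter (fun p => ¬ Inn p) with hN
  have hNmem : ∀ p : ℕ × ℕ, p ∈ N ↔ (p.1 ∈ S ∧ p.2 ∈ S ∧ p.1 < p.2 ∧ ¬ Inn p) := by
    intro p
    rw [hN, Finset.mem_filter, hAmem]
    tauto
  have hSne : S.Nonempty := by rw [← Finset.card_pos]; omega
  have hNcard : N.card ≤ S.card := by
    apply Finset.card_le_card_of_injOn
      (fun p => if ∃ x ∈ S, x < p.1 ∨ p.2 < x then p.1 else S.max' hSne)
    · intro p hp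
      rw [Finset.mem_coe, hNmem] at hp
      by_cases h : ∃ x ∈ S, x < p.1 ∨ p.2 < x
      · simp only [if_pos h]
        exact hp.1
      · simp only [if_neg h]; exact S.max'_mem hSne
    · intro p hp q hq heq
      simp only [Finset.mem_coe] at hp hq
      rw [hNmem] at hp hq
      obtain ⟨hp1, hp2, hplt, hpni⟩ := hp
      obtain ⟨hq1, hq2, hqlt, hqni⟩ := hq
      by_cases hcp : ∃ x ∈ S, x < p.1 ∨ p.2 < x
      · by_cases hcq : ∃ x ∈ S, x < q.1 ∨ q.2 < x
        · simp only [if_pos hcp, if_pos hcq] at heq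
          have hpb : ¬ ∃ x ∈ S, p.1 < x ∧ x < p.2 := by
            rw [hInn] at hpni
            rcases not_and_or.mp hpni with h | h
            · exact h
            · exact absurd hcp h
          have hqb : ¬ ∃ x ∈ S, q.1 < x ∧ x < q.2 := by
            rw [hInn] at hqni
            rcases not_and_or.mp hqni with h | h
            · exact h
            · exact absurd hcq h
          push_neg at hpb hqb
          have h2 : p.2 = q.2 := by
            rcases lt_trichotomy p.2 q.2 with h | h | h
            · have := hqb p.2 hp2; omega
            · exact h
            · have := hpb q.2 hq2; omega
          exact Prod.ext heq h2
        · simp only [if_pos hcp, if_neg hcq] at heq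
          exfalso
          have := S.le_max' p.2 hp2
          omega
      · by_cases hcq : ∃ x ∈ S, x < q.1 ∨ q.2 < x
        · simp only [if_neg hcp, if_pos hcq] at heq
          exfalso
          have := S.le_max' q.2 hq2
          omega
        · push_neg at hcp hcq
          have e1 := hcp q.1 hq1
          have e2 := hcq p.1 hp1
          have e3 := hcp q.2 hq2
          have e4 := hcq p.2 hp2
          exact Prod.ext (by omega) (by omega)
  -- pages
  set C : Fin k → Finset (ℕ × ℕ) := fun pp =>
    (Finset.univ.filter (fun q : Fin n × Fin n =>
      pg s(q.1, q.2) = pp ∧ f q.1 < f q.2 ∧ Inn (f q.1, f q.2))).image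
      (fun q => (f q.1, f q.2)) with hC
  have hCmem : ∀ pp, ∀ p ∈ C pp, (∃ a b : Fin n, f a = p.1 ∧ f b = p.2 ∧
      pg s(a, b) = pp ∧ f a < f b ∧ Inn p) := by
    intro pp p hp
    rw [hC] at hp
    simp only [Finset.mem_image, Finset.mem_filter, Finset.mem_univ, true_and] at hp
    obtain ⟨q, ⟨hq1, hq2, hq3⟩, rfl⟩ := hp
    exact ⟨q.1, q.2, rfl, rfl, hq1, hq2, hq3⟩
  have hCbound : ∀ pp, (C pp).card ≤ S.card - 3 := by
    intro pp
    apply chordBound S.card S (C pp) le_rfl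
    · intro p hp
      obtain ⟨a, b, ha, hb, _, hab, _⟩ := hCmem pp p hp
      refine ⟨?_, ?_, by omega⟩
      · rw [← ha, hSdef]; exact Finset.mem_image_of_mem f (Finset.mem_univ a)
      · rw [← hb, hSdef]; exact Finset.mem_image_of_mem f (Finset.mem_univ b)
    · intro p hp
      obtain ⟨a, b, ha, hb, _, _, hinn⟩ := hCmem pp p hp
      rw [hInn] at hinn
      exact hinn.1
    · intro p hp
      obtain ⟨a, b, ha, hb, _, _, hinn⟩ := hCmem pp p hp
      rw [hInn] at hinn
      exact hinn.2
    · intro p hp q hq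
      obtain ⟨a, b, ha, hb, hpga, habf, _⟩ := hCmem pp p hp
      obtain ⟨c, d, hc, hd, hpgc, hcdf, _⟩ := hCmem pp q hq
      intro ⟨u1, u2, u3⟩
      have hadj1 : (⊤ : SimpleGraph (Fin n)).Adj a b := by
        simp only [SimpleGraph.top_adj]
        intro h; rw [h] at habf; omega
      have hadj2 : (⊤ : SimpleGraph (Fin n)).Adj c d := by
        simp only [SimpleGraph.top_adj]
        intro h; rw [h] at hcdf; omega
      exact hpg a b c d hadj1 hadj2 habf hcdf (hpga.trans hpgc.symm)
        (Or.inl ⟨by omega, by omega, by omega⟩)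
  -- inner pairs are covered by the pages
  have hIsub : A.filter Inn ⊆ Finset.univ.biUnion C := by
    intro p hp
    rw [Finset.mem_filter, hAmem] at hp
    obtain ⟨⟨hp1, hp2, hplt⟩, hinn⟩ := hp
    rw [hSdef] at hp1 hp2
    simp only [Finset.mem_image, Finset.mem_univ, true_and] at hp1 hp2
    obtain ⟨a, ha⟩ := hp1
    obtain ⟨b, hb⟩ := hp2
    rw [Finset.mem_biUnion]
    refine ⟨pg s(a, b), Finset.mem_univ _, ?_⟩
    rw [hC]
    simp only [Finset.mem_image, Finset.mem_filter, Finset.mem_univ, true_and]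
    exact ⟨(a, b), ⟨rfl, by rw [ha, hb]; exact hplt, by rw [ha, hb]; exact hinn⟩,
      by rw [ha, hb]⟩
  have hIcard : (A.filter Inn).card ≤ k * (S.card - 3) := by
    calc (A.filter Inn).card ≤ (Finset.univ.biUnion C).card := Finset.card_le_card hIsub
      _ ≤ ∑ pp : Fin k, (C pp).card := Finset.card_biUnion_le
      _ ≤ ∑ _pp : Fin k, (S.card - 3) := Finset.sum_le_sum (fun pp _ => hCbound pp)
      _ = k * (S.card - 3) := by
          rw [Finset.sum_const, Finset.card_univ, Fintype.card_fin, smul_eq_mul]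
  have hsplitA : A.card ≤ (A.filter Inn).card + N.card := by
    have hsub : A ⊆ (A.filter Inn) ∪ N := by
      intro p hp
      rw [Finset.mem_union, Finset.mem_filter, hNmem, hAmem]
      rw [hAmem] at hp
      by_cases h : Inn p
      · exact Or.inl ⟨hp, h⟩
      · exact Or.inr ⟨hp.1, hp.2.1, hp.2.2, h⟩
    calc A.card ≤ ((A.filter Inn) ∪ N).card := Finset.card_le_card hsub
      _ ≤ (A.filter Inn).card + N.card := Finset.card_union_le _ _
  -- final arithmetic
  rw [hScard] at hAcard hNcard hIcard
  obtain ⟨m, rfl⟩ := Nat.exists_eq_add_of_le hn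
  have hm3 : 4 + m - 3 = m + 1 := by omega
  rw [hm3] at hIcard
  have hfin : (4 + m) * (4 + m) ≤ 2 * (k * (m + 1)) + 3 * (4 + m) := by omega
  have h2k : 4 + m ≤ 2 * k := by nlinarith
  omega

/-- The book thickness of the complete graph `K_n` equals `⌈n / 2⌉` for `n ≥ 4`. -/
theorem stmt_7 (n : ℕ) (hn : 4 ≤ n) :
    bookThickness (⊤ : SimpleGraph (Fin n)) = (n + 1) / 2 := by
  apply le_antisymm
  · exact Nat.sInf_le (upperBound n hn)
  · refine le_csInf ⟨_, upperBound n hn⟩ ?_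
    rintro b ⟨f, hf, pg, hpg⟩
    exact lowerBound n b hn f hf pg hpg
end

section
/- For every r ≥ 1, any family of r^3 pairwise disjoint edges in a graph with a fixed vertex ordering contains r edges that form an r-rainbow, an r-twist, or an r-necklace. -/
namespace Stmt15Aux

open Finset Function
open scoped Classical

variable {V : Type*} [LinearOrder V] {n : ℕ}

/-- Finset of "chains" (for an abstract property `P`) whose `s`-maximum is `i`. -/
noncomputable def chains (s : Fin n → V) (P : Finset (Fin n) → Prop) (i : Fin n) :
    Finset (Finset (Fin n)) :=
  univ.powerset.filter (fun S => P S ∧ i ∈ S ∧ ∀ j ∈ S, s j ≤ s i)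

/-- Height: the largest size of a chain ending at `i`. -/
noncomputable def ht (s : Fin n → V) (P : Finset (Fin n) → Prop) (i : Fin n) : ℕ :=
  (chains s P i).sup Finset.card

lemma singleton_mem_chains (s : Fin n → V) {P : Finset (Fin n) → Prop} {i : Fin n}
    (hP1 : P {i}) : ({i} : Finset (Fin n)) ∈ chains s P i := by
  refine mem_filter.mpr ⟨mem_powerset.mpr (subset_univ _), hP1, mem_singleton_self i, ?_⟩
  intro j hj
  rw [mem_singleton] at hj
  subst hj; exact le_rfl

lemma mem_chains_iff {s : Fin n → V} {P : Finset (Fin n) → Prop} {i : Fin n}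
    {S : Finset (Fin n)} :
    S ∈ chains s P i ↔ P S ∧ i ∈ S ∧ ∀ j ∈ S, s j ≤ s i := by
  simp [chains]

lemma one_le_ht (s : Fin n → V) {P : Finset (Fin n) → Prop} {i : Fin n}
    (hP1 : P {i}) : 1 ≤ ht s P i :=
  calc 1 = ({i} : Finset (Fin n)).card := (card_singleton i).symm
  _ ≤ ht s P i := Finset.le_sup (singleton_mem_chains s hP1)

lemma ht_lt (s : Fin n → V) {P : Finset (Fin n) → Prop} {i j : Fin n}
    (hP1 : P {i}) (hsij : s i < s j)
    (hP : ∀ S ∈ chains s P i, P (insert j S)) :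
    ht s P i < ht s P j := by
  obtain ⟨S, hS, hEq⟩ := Finset.exists_mem_eq_sup (chains s P i)
    ⟨{i}, singleton_mem_chains s hP1⟩ Finset.card
  obtain ⟨hPS, hiS, hbnd⟩ := mem_chains_iff.mp hS
  have hjS : j ∉ S := fun h => absurd (hbnd j h) (not_le.mpr hsij)
  have hmem : insert j S ∈ chains s P j := by
    refine mem_chains_iff.mpr ⟨hP S hS, mem_insert_self _ _, ?_⟩
    intro b hb
    rcases mem_insert.mp hb with rfl | hb
    · exact le_rfl
    · exact (hbnd b hb).trans hsij.le
  have h2 := Finset.le_sup (f := Finset.card) hmem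
  have h3 : (insert j S).card = S.card + 1 := card_insert_of_notMem hjS
  unfold ht
  omega

lemma exists_of_le_ht {s : Fin n → V} {P : Finset (Fin n) → Prop} {i : Fin n} {r : ℕ}
    (hP1 : P {i}) (hmono : ∀ S S' : Finset (Fin n), S' ⊆ S → P S → P S')
    (h : r ≤ ht s P i) : ∃ S : Finset (Fin n), P S ∧ S.card = r := by
  obtain ⟨S, hS, hEq⟩ := Finset.exists_mem_eq_sup (chains s P i)
    ⟨{i}, singleton_mem_chains s hP1⟩ Finset.card
  have hr : r ≤ S.card := by rw [← hEq]; exact h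
  obtain ⟨S', hsub, hcard⟩ := Finset.exists_subset_card_eq hr
  exact ⟨S', hmono S S' hsub (mem_chains_iff.mp hS).1, hcard⟩

lemma extract {s : Fin n → V} (hsinj : Function.Injective s) {S : Finset (Fin n)} {r : ℕ}
    (hr : 1 ≤ r) (hcard : S.card = r) :
    ∃ σ : Fin r → Fin n, Function.Injective σ ∧ (∀ i, σ i ∈ S) ∧
      StrictMono (fun i => s (σ i)) := by
  have hSne : S.Nonempty := card_pos.mp (by omega)
  haveI : Nonempty (Fin n) := ⟨hSne.choose⟩
  have hTcard : (S.image s).card = r := by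
    rw [card_image_of_injective _ hsinj, hcard]
  let e := (S.image s).orderIsoOfFin hTcard
  have key : ∀ i : Fin r, invFun s ((e i : V)) ∈ S ∧ s (invFun s ((e i : V))) = (e i : V) := by
    intro i
    obtain ⟨j, hj, hje⟩ := mem_image.mp (e i).2
    rw [← hje, leftInverse_invFun hsinj j]
    exact ⟨hj, rfl⟩
  have hmono : StrictMono (fun i : Fin r => s (invFun s ((e i : V)))) := by
    intro a b hab
    have h1 : e a < e b := e.strictMono hab
    have h2 : (e a : V) < (e b : V) := h1
    simpa only [(key a).2, (key b).2] using h2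
  refine ⟨fun i => invFun s ((e i : V)), ?_, fun i => (key i).1, hmono⟩
  intro a b h
  exact hmono.injective (congrArg s h)

end Stmt15Aux

/-- For every `r ≥ 1`, any family of `r ^ 3` pairwise disjoint edges
`(s i, t i)` (with `s i ≺ t i`) of a graph `G` with a fixed vertex ordering
contains `r` edges forming an `r`-rainbow
(`s_1 ≺ ⋯ ≺ s_r ≺ t_r ≺ ⋯ ≺ t_1`), an `r`-twist
(`s_1 ≺ ⋯ ≺ s_r ≺ t_1 ≺ ⋯ ≺ t_r`), or an `r`-necklace
(`s_1 ≺ t_1 ≺ ⋯ ≺ s_r ≺ t_r`). -/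
theorem stmt_15 {V : Type*} [LinearOrder V] (G : SimpleGraph V) (r : ℕ)
    (hr : 1 ≤ r) (s t : Fin (r ^ 3) → V)
    (hadj : ∀ i, G.Adj (s i) (t i)) (hst : ∀ i, s i < t i)
    (hdisj : ∀ i j, i ≠ j → s i ≠ s j ∧ s i ≠ t j ∧ t i ≠ s j ∧ t i ≠ t j) :
    ∃ σ : Fin r → Fin (r ^ 3), Function.Injective σ ∧
      ((StrictMono (fun i => s (σ i)) ∧ StrictAnti (fun i => t (σ i))) ∨
       (StrictMono (fun i => s (σ i)) ∧ StrictMono (fun i => t (σ i)) ∧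
         ∀ i j : Fin r, s (σ i) < t (σ j)) ∨
       (∀ i j : Fin r, i < j → t (σ i) < s (σ j))) := by
  classical
  open Finset Stmt15Aux in
  have hsinj : Function.Injective s := by
    intro i j h
    by_contra hne
    exact (hdisj i j hne).1 h
  set PR : Finset (Fin (r ^ 3)) → Prop :=
    fun S => ∀ i ∈ S, ∀ j ∈ S, s i < s j → t j < t i with hPRdef
  set PN : Finset (Fin (r ^ 3)) → Prop :=
    fun S => ∀ i ∈ S, ∀ j ∈ S, s i < s j → t i < s j with hPNdef
  have hPR1 : ∀ i, PR {i} := by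
    intro i a ha b hb hab
    rw [Finset.mem_singleton] at ha hb
    subst ha; subst hb
    exact absurd hab (lt_irrefl _)
  have hPN1 : ∀ i, PN {i} := by
    intro i a ha b hb hab
    rw [Finset.mem_singleton] at ha hb
    subst ha; subst hb
    exact absurd hab (lt_irrefl _)
  have hPRmono : ∀ S S' : Finset (Fin (r ^ 3)), S' ⊆ S → PR S → PR S' :=
    fun S S' hsub h a ha b hb hab => h a (hsub ha) b (hsub hb) hab
  have hPNmono : ∀ S S' : Finset (Fin (r ^ 3)), S' ⊆ S → PN S → PN S' :=
    fun S S' hsub h a ha b hb hab => h a (hsub ha) b (hsub hb) hab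
  by_cases h1 : ∃ i, r ≤ ht s PR i
  · -- rainbow
    obtain ⟨i, hi⟩ := h1
    obtain ⟨S, hPS, hcard⟩ := exists_of_le_ht (hPR1 i) hPRmono hi
    obtain ⟨σ, hinj, hmem, hmono⟩ := extract hsinj hr hcard
    refine ⟨σ, hinj, Or.inl ⟨hmono, ?_⟩⟩
    intro a b hab
    exact hPS (σ a) (hmem a) (σ b) (hmem b) (hmono hab)
  by_cases h2 : ∃ i, r ≤ ht s PN i
  · -- necklace
    obtain ⟨i, hi⟩ := h2
    obtain ⟨S, hPS, hcard⟩ := exists_of_le_ht (hPN1 i) hPNmono hi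
    obtain ⟨σ, hinj, hmem, hmono⟩ := extract hsinj hr hcard
    refine ⟨σ, hinj, Or.inr (Or.inr ?_)⟩
    intro a b hab
    exact hPS (σ a) (hmem a) (σ b) (hmem b) (hmono hab)
  -- twist via pigeonhole
  push_neg at h1 h2
  have hNpos : 0 < r ^ 3 := pow_pos (by omega) 3
  have hr2 : 2 ≤ r := by
    have hf := h1 ⟨0, hNpos⟩
    have := one_le_ht s (hPR1 ⟨0, hNpos⟩)
    omega
  set box : Finset (ℕ × ℕ) := Finset.Ioo 0 r ×ˢ Finset.Ioo 0 r with hbox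
  have hmaps : ∀ a ∈ (Finset.univ : Finset (Fin (r ^ 3))),
      (ht s PR a, ht s PN a) ∈ box := by
    intro a _
    simp only [hbox, Finset.mem_product, Finset.mem_Ioo]
    exact ⟨⟨one_le_ht s (hPR1 a), h1 a⟩, ⟨one_le_ht s (hPN1 a), h2 a⟩⟩
  have hboxne : box.Nonempty := by
    refine ⟨(1, 1), ?_⟩
    simp only [hbox, Finset.mem_product, Finset.mem_Ioo]
    omega
  have hcardbd : box.card * r ≤ (Finset.univ : Finset (Fin (r ^ 3))).card := by
    rw [hbox, Finset.card_product, Nat.card_Ioo, Finset.card_univ, Fintype.card_fin]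
    have h3 : (r - 0 - 1) * (r - 0 - 1) * r ≤ r * r * r :=
      Nat.mul_le_mul (Nat.mul_le_mul (by omega) (by omega)) le_rfl
    calc (r - 0 - 1) * (r - 0 - 1) * r ≤ r * r * r := h3
      _ = r ^ 3 := by ring
  obtain ⟨y, _, hfib⟩ :=
    Finset.exists_le_card_fiber_of_mul_le_card_of_maps_to hmaps hboxne hcardbd
  obtain ⟨C, hCsub, hCcard⟩ :=
    Finset.exists_subset_card_eq hfib
  have hCfix : ∀ i ∈ C, (ht s PR i, ht s PN i) = y := by
    intro i hi
    exact (Finset.mem_filter.mp (hCsub hi)).2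
  -- C is pairwise crossing
  have hTw : ∀ i ∈ C, ∀ j ∈ C, s i < s j → t i < t j ∧ s j < t i := by
    intro i hi j hj hij
    have hne : i ≠ j := fun h => by subst h; exact absurd hij (lt_irrefl _)
    have heq : ht s PR i = ht s PR j ∧ ht s PN i = ht s PN j := by
      have := (hCfix i hi).trans (hCfix j hj).symm
      exact ⟨congrArg Prod.fst this, congrArg Prod.snd this⟩
    constructor
    · by_contra hcon
      have htji : t j < t i :=
        lt_of_le_of_ne (not_lt.mp hcon) ((hdisj i j hne).2.2.2).symm
      have : ht s PR i < ht s PR j := by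
        refine ht_lt s (hPR1 i) hij ?_
        intro S hS
        obtain ⟨hPS, hiS, hbnd⟩ := Stmt15Aux.mem_chains_iff.mp hS
        intro a ha b hb hab
        rcases Finset.mem_insert.mp ha with ha' | ha'
        · rcases Finset.mem_insert.mp hb with hb' | hb'
          · rw [ha', hb'] at hab; exact absurd hab (lt_irrefl _)
          · rw [ha'] at hab
            exact absurd hab (not_lt.mpr ((hbnd b hb').trans hij.le))
        · rcases Finset.mem_insert.mp hb with hb' | hb'
          · rw [hb']
            rcases eq_or_lt_of_le (hbnd a ha') with hea | hlt
            · rw [hsinj hea]; exact htji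
            · exact htji.trans (hPS a ha' i hiS hlt)
          · exact hPS a ha' b hb' hab
      omega
    · by_contra hcon
      have htisj : t i < s j :=
        lt_of_le_of_ne (not_lt.mp hcon) ((hdisj i j hne).2.2.1)
      have : ht s PN i < ht s PN j := by
        refine ht_lt s (hPN1 i) hij ?_
        intro S hS
        obtain ⟨hPS, hiS, hbnd⟩ := Stmt15Aux.mem_chains_iff.mp hS
        intro a ha b hb hab
        rcases Finset.mem_insert.mp ha with ha' | ha'
        · rcases Finset.mem_insert.mp hb with hb' | hb'
          · rw [ha', hb'] at hab; exact absurd hab (lt_irrefl _)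
          · rw [ha'] at hab
            exact absurd hab (not_lt.mpr ((hbnd b hb').trans hij.le))
        · rcases Finset.mem_insert.mp hb with hb' | hb'
          · rw [hb']
            rcases eq_or_lt_of_le (hbnd a ha') with hea | hlt
            · rw [hsinj hea]; exact htisj
            · exact (hPS a ha' i hiS hlt).trans hij
          · exact hPS a ha' b hb' hab
      omega
  obtain ⟨σ, hinj, hmem, hmono⟩ := extract hsinj hr hCcard
  refine ⟨σ, hinj, Or.inr (Or.inl ⟨hmono, ?_, ?_⟩)⟩
  · intro a b hab
    exact (hTw (σ a) (hmem a) (σ b) (hmem b) (hmono hab)).1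
  · intro a b
    rcases lt_trichotomy a b with hab | rfl | hab
    · exact (hmono hab).trans (hst (σ b))
    · exact hst (σ a)
    · exact (hTw (σ b) (hmem b) (σ a) (hmem a) (hmono hab)).2
end

section
/- In any linear order of the 2n vertices of a perfect matching with n ≥ r^3 edges, there exist r matching edges forming an r-rainbow, an r-twist, or an r-necklace; in particular, a perfect matching with at least k^3 edges placed so that it contains a k-twist requires k pages. -/
/-- Two edges `(a,b)` and `(c,d)` with `a ≺ b` and `c ≺ d` cross if
`a ≺ c ≺ b ≺ d` or `c ≺ a ≺ d ≺ b`. -/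
def Cross {V : Type*} [LinearOrder V] (a b c d : V) : Prop :=
  (a < c ∧ c < b ∧ b < d) ∨ (c < a ∧ a < d ∧ d < b)

/-- Height of `i` with respect to a relation `rel`, measured along `μ`. -/
def rh {n : ℕ} (μ : Fin n → ℕ) (rel : Fin n → Fin n → Prop) [DecidableRel rel] (i : Fin n) : ℕ :=
  ((Finset.univ.filter fun j => rel j i ∧ μ j < μ i).attach.sup fun j => rh μ rel j.1 + 1)
termination_by μ i
decreasing_by exact (Finset.mem_filter.mp j.2).2.2

lemma rh_lt {n : ℕ} {μ : Fin n → ℕ} {rel : Fin n → Fin n → Prop} [DecidableRel rel]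
    (hμ : ∀ a b, rel a b → μ a < μ b) {j i : Fin n} (h : rel j i) :
    rh μ rel j < rh μ rel i := by
  have hm : j ∈ Finset.univ.filter fun k => rel k i ∧ μ k < μ i :=
    Finset.mem_filter.mpr ⟨Finset.mem_univ _, h, hμ _ _ h⟩
  have : rh μ rel j + 1 ≤ rh μ rel i := by
    conv_rhs => rw [rh]
    exact Finset.le_sup (f := fun x => rh μ rel x.1 + 1) (Finset.mem_attach _ ⟨j, hm⟩)
  omega

lemma rh_chain {n : ℕ} {μ : Fin n → ℕ} {rel : Fin n → Fin n → Prop} [DecidableRel rel]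
    (htr : ∀ a b c, rel a b → rel b c → rel a c) :
    ∀ m (i : Fin n), m ≤ rh μ rel i →
      ∃ σ : Fin (m + 1) → Fin n, σ (Fin.last m) = i ∧
        ∀ a b : Fin (m + 1), a < b → rel (σ a) (σ b) := by
  intro m
  induction m with
  | zero =>
    intro i _
    refine ⟨fun _ => i, rfl, ?_⟩
    intro a b hab
    rw [Fin.lt_def] at hab
    have := a.2; have := b.2; omega
  | succ m ih =>
    intro i hi
    rw [rh] at hi
    obtain ⟨j, -, hj⟩ := (Finset.le_sup_iff (by omega : (0:ℕ) < m + 1)).mp hi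
    have hjrel : rel j.1 i := (Finset.mem_filter.mp j.2).2.1
    obtain ⟨σ₀, hlast, hchain⟩ := ih j.1 (by omega)
    refine ⟨Fin.snoc σ₀ i, Fin.snoc_last _ _, ?_⟩
    intro a b hab
    rcases Fin.eq_castSucc_or_eq_last b with ⟨b', rfl⟩ | rfl
    · have ha : a ≠ Fin.last (m + 1) := by
        intro h; subst h
        exact absurd (lt_of_lt_of_le hab (Fin.le_last _)) (lt_irrefl _)
      obtain ⟨a', rfl⟩ := Fin.exists_castSucc_eq.mpr ha
      rw [Fin.snoc_castSucc, Fin.snoc_castSucc]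
      exact hchain a' b' (by simpa using hab)
    · have ha : a ≠ Fin.last (m + 1) := ne_of_lt hab
      obtain ⟨a', rfl⟩ := Fin.exists_castSucc_eq.mpr ha
      rw [Fin.snoc_castSucc, Fin.snoc_last]
      rcases eq_or_ne a' (Fin.last m) with rfl | ha'
      · rw [hlast]; exact hjrel
      · have : a' < Fin.last m := lt_of_le_of_ne (Fin.le_last _) ha'
        exact htr _ _ _ (hchain a' (Fin.last m) this) (hlast ▸ hjrel)

/-- In any linear order of the `2n` vertices of a perfect matching with
`n ≥ r ^ 3` edges `(s i, t i)` (pairwise disjoint and covering all vertices),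
there exist `r` matching edges forming an `r`-rainbow, an `r`-twist, or an
`r`-necklace; moreover, if `r` of the matching edges form an `r`-twist, then
in any valid page assignment (same-page edges do not cross) these `r` edges
receive pairwise distinct pages, so the matching requires `r` pages. -/
theorem stmt_18 {V P : Type*} [LinearOrder V] (r n : ℕ) (hn : r ^ 3 ≤ n)
    (s t : Fin n → V) (hst : ∀ i, s i < t i)
    (hdisj : ∀ i j, i ≠ j → s i ≠ s j ∧ s i ≠ t j ∧ t i ≠ s j ∧ t i ≠ t j)
    (hperfect : ∀ v : V, ∃ i, v = s i ∨ v = t i) :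
    (∃ σ : Fin r → Fin n, Function.Injective σ ∧
      ((StrictMono (fun i => s (σ i)) ∧ StrictAnti (fun i => t (σ i))) ∨
       (StrictMono (fun i => s (σ i)) ∧ StrictMono (fun i => t (σ i)) ∧
         ∀ i j : Fin r, s (σ i) < t (σ j)) ∨
       (∀ i j : Fin r, i < j → t (σ i) < s (σ j)))) ∧
    (∀ σ : Fin r → Fin n, Function.Injective σ →
      (StrictMono (fun i => s (σ i)) ∧ StrictMono (fun i => t (σ i)) ∧
        ∀ i j : Fin r, s (σ i) < t (σ j)) →
      ∀ pg : Fin n → P,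
        (∀ i j, pg i = pg j → ¬Cross (s i) (t i) (s j) (t j)) →
        Function.Injective (pg ∘ σ)) := by
  have hsne : ∀ i j : Fin n, i ≠ j → s i ≠ s j := fun i j h => (hdisj i j h).1
  have htne : ∀ i j : Fin n, i ≠ j → t i ≠ t j := fun i j h => (hdisj i j h).2.2.2
  have hts : ∀ i j : Fin n, t i ≠ s j := by
    intro i j
    rcases eq_or_ne i j with rfl | h
    · exact (hst i).ne'
    · exact (hdisj i j h).2.2.1
  constructor
  · -- existence of rainbow, twist, or necklace
    rcases Nat.eq_zero_or_pos r with rfl | hr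
    · exact ⟨Fin.elim0, fun a => a.elim0, Or.inr (Or.inr (fun i => i.elim0))⟩
    -- the measure
    set μ : Fin n → ℕ := fun i => (Finset.univ.filter fun k => s k < s i).card with hμdef
    have hμ : ∀ i j : Fin n, s i < s j → μ i < μ j := by
      intro i j hij
      apply Finset.card_lt_card
      constructor
      · intro k hk
        simp only [Finset.mem_filter, Finset.mem_univ, true_and] at hk ⊢
        exact lt_trans hk hij
      · intro hsub
        have : i ∈ Finset.univ.filter fun k => s k < s j := by
          simp only [Finset.mem_filter, Finset.mem_univ, true_and]; exact hij
        have := hsub this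
        simp only [Finset.mem_filter, Finset.mem_univ, true_and] at this
        exact absurd this (lt_irrefl _)
    -- the necklace relation
    set relN : Fin n → Fin n → Prop := fun i j => t i < s j with hrelN
    have hμN : ∀ a b, relN a b → μ a < μ b := fun a b h => hμ a b (lt_trans (hst a) h)
    have htrN : ∀ a b c, relN a b → relN b c → relN a c :=
      fun a b c h1 h2 => lt_trans h1 (lt_trans (hst b) h2)
    by_cases hN : ∃ i, r - 1 ≤ rh μ relN i
    · -- necklace
      obtain ⟨i, hi⟩ := hN
      obtain ⟨σ₀, -, hchain⟩ := rh_chain htrN (r - 1) i hi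
      have hcast : r = r - 1 + 1 := by omega
      set σ : Fin r → Fin n := fun a => σ₀ (Fin.cast hcast a) with hσ
      have hcl : ∀ a b : Fin r, a < b → relN (σ a) (σ b) := by
        intro a b h
        exact hchain _ _ (by rw [Fin.lt_def]; simp only [Fin.coe_cast]; exact h)
      refine ⟨σ, ?_, Or.inr (Or.inr hcl)⟩
      intro a b hab
      by_contra hne
      rcases lt_trichotomy a b with h | h | h
      · have h2 := hcl a b h
        rw [hab] at h2
        exact absurd h2 (not_lt.mpr (hst _).le)
      · exact hne h
      · have h2 := hcl b a h
        rw [hab] at h2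
        exact absurd h2 (not_lt.mpr (hst _).le)
    push_neg at hN
    have hr2 : 2 ≤ r := by
      by_contra h
      have hr1 : r = 1 := by omega
      subst hr1
      have hn1 : 1 ≤ n := by simpa using hn
      exact absurd (hN ⟨0, by omega⟩) (by omega)
    -- pigeonhole into height classes
    have hmap : ∀ i ∈ (Finset.univ : Finset (Fin n)),
        rh μ relN i ∈ Finset.range (r - 1) := by
      intro i _
      exact Finset.mem_range.mpr (hN i)
    have hcard : (Finset.range (r - 1)).card * (r - 1) ^ 2 <
        (Finset.univ : Finset (Fin n)).card := by
      rw [Finset.card_range, Finset.card_univ, Fintype.card_fin]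
      calc (r - 1) * (r - 1) ^ 2 = (r - 1) ^ 3 := by ring
        _ < r ^ 3 := Nat.pow_lt_pow_left (by omega) (by norm_num)
        _ ≤ n := hn
    obtain ⟨b, -, hC⟩ :=
      Finset.exists_lt_card_fiber_of_mul_lt_card_of_maps_to hmap hcard
    set C : Finset (Fin n) := Finset.univ.filter fun i => rh μ relN i = b with hCdef
    -- within a class, all pairs of edges overlap
    have hoverlap : ∀ i ∈ C, ∀ j ∈ C, i ≠ j → s i < t j := by
      intro i hi j hj hij
      by_contra h
      rcases lt_or_eq_of_le (not_lt.mp h) with h' | h'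
      · have : rh μ relN j < rh μ relN i := rh_lt hμN h'
        rw [hCdef] at hi hj
        simp only [Finset.mem_filter, Finset.mem_univ, true_and] at hi hj
        omega
      · exact hts j i h'
    -- increasing and decreasing relations within the class
    set relI : Fin n → Fin n → Prop :=
      fun i j => i ∈ C ∧ j ∈ C ∧ s i < s j ∧ t i < t j with hrelI
    set relD : Fin n → Fin n → Prop :=
      fun i j => i ∈ C ∧ j ∈ C ∧ s i < s j ∧ t j < t i with hrelD
    have hμI : ∀ a b, relI a b → μ a < μ b := fun a b h => hμ a b h.2.2.1
    have hμD : ∀ a b, relD a b → μ a < μ b := fun a b h => hμ a b h.2.2.1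
    have htrI : ∀ a b c, relI a b → relI b c → relI a c :=
      fun a b c h1 h2 => ⟨h1.1, h2.2.1, lt_trans h1.2.2.1 h2.2.2.1, lt_trans h1.2.2.2 h2.2.2.2⟩
    have htrD : ∀ a b c, relD a b → relD b c → relD a c :=
      fun a b c h1 h2 => ⟨h1.1, h2.2.1, lt_trans h1.2.2.1 h2.2.2.1, lt_trans h2.2.2.2 h1.2.2.2⟩
    by_cases hI : ∃ i, r - 1 ≤ rh μ relI i
    · -- twist
      obtain ⟨i, hi⟩ := hI
      obtain ⟨σ₀, -, hchain⟩ := rh_chain htrI (r - 1) i hi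
      have hcast : r = r - 1 + 1 := by omega
      set σ : Fin r → Fin n := fun a => σ₀ (Fin.cast hcast a) with hσ
      have hchain' : ∀ a b : Fin r, a < b → relI (σ a) (σ b) := by
        intro a b hab
        exact hchain _ _ (by rw [Fin.lt_def]; simp only [Fin.coe_cast]; exact hab)
      have hsmono : StrictMono (fun a => s (σ a)) := fun a b hab => (hchain' a b hab).2.2.1
      have hinj : Function.Injective σ := by
        intro a b hab
        by_contra hne
        rcases lt_trichotomy a b with h | h | h
        · exact absurd (congrArg s hab) (ne_of_lt (hchain' a b h).2.2.1)
        · exact hne h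
        · exact absurd (congrArg s hab) (ne_of_gt (hchain' b a h).2.2.1)
      refine ⟨σ, hinj, Or.inr (Or.inl ?_)⟩
      refine ⟨hsmono, fun a b hab => (hchain' a b hab).2.2.2, ?_⟩
      intro a b
      rcases lt_trichotomy a b with h | rfl | h
      · exact lt_trans (hchain' a b h).2.2.1 (hst _)
      · exact hst _
      · have hrel := hchain' b a h
        exact hoverlap _ hrel.2.1 _ hrel.1 (fun he => absurd (congrArg s he) (ne_of_gt hrel.2.2.1))
    by_cases hD : ∃ i, r - 1 ≤ rh μ relD i
    · -- rainbow
      obtain ⟨i, hi⟩ := hD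
      obtain ⟨σ₀, -, hchain⟩ := rh_chain htrD (r - 1) i hi
      have hcast : r = r - 1 + 1 := by omega
      set σ : Fin r → Fin n := fun a => σ₀ (Fin.cast hcast a) with hσ
      have hchain' : ∀ a b : Fin r, a < b → relD (σ a) (σ b) := by
        intro a b hab
        exact hchain _ _ (by rw [Fin.lt_def]; simp only [Fin.coe_cast]; exact hab)
      have hsmono : StrictMono (fun a => s (σ a)) := fun a b hab => (hchain' a b hab).2.2.1
      refine ⟨σ, ?_, Or.inl ⟨hsmono, fun a b hab => (hchain' a b hab).2.2.2⟩⟩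
      intro a b hab
      by_contra hne
      rcases lt_trichotomy a b with h | h | h
      · exact absurd (congrArg s hab) (ne_of_lt (hchain' a b h).2.2.1)
      · exact hne h
      · exact absurd (congrArg s hab) (ne_of_gt (hchain' b a h).2.2.1)
    -- impossible: pigeonhole on the pair of heights within the class
    exfalso
    push_neg at hI hD
    have hmap2 : ∀ i ∈ C, (rh μ relI i, rh μ relD i) ∈
        Finset.range (r - 1) ×ˢ Finset.range (r - 1) := by
      intro i _
      exact Finset.mem_product.mpr ⟨Finset.mem_range.mpr (hI i), Finset.mem_range.mpr (hD i)⟩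
    have hcard2 : (Finset.range (r - 1) ×ˢ Finset.range (r - 1)).card < C.card := by
      rw [Finset.card_product, Finset.card_range]
      calc (r - 1) * (r - 1) = (r - 1) ^ 2 := by ring
        _ < C.card := hC
    obtain ⟨i, hi, j, hj, hij, heq⟩ :=
      Finset.exists_ne_map_eq_of_card_lt_of_maps_to hcard2 hmap2
    have heqI : rh μ relI i = rh μ relI j := congrArg Prod.fst heq
    have heqD : rh μ relD i = rh μ relD j := congrArg Prod.snd heq
    have key : ∀ x ∈ C, ∀ y ∈ C, x ≠ y → rh μ relI x = rh μ relI y →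
        rh μ relD x = rh μ relD y → s x < s y → False := by
      intro x hx y hy hxy hIxy hDxy hs
      rcases lt_trichotomy (t x) (t y) with h | h | h
      · exact absurd hIxy (ne_of_lt (rh_lt hμI ⟨hx, hy, hs, h⟩))
      · exact htne x y hxy h
      · exact absurd hDxy (ne_of_lt (rh_lt hμD ⟨hx, hy, hs, h⟩))
    rcases lt_trichotomy (s i) (s j) with h | h | h
    · exact key i hi j hj hij heqI heqD h
    · exact hsne i j hij h
    · exact key j hj i hi hij.symm heqI.symm heqD.symm h
  · -- twists need distinct pages
    intro σ hσ ⟨hsmono, htmono, htw⟩ pg hpg a b hab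
    by_contra hne
    rcases lt_trichotomy a b with h | h | h
    · exact hpg (σ a) (σ b) hab (Or.inl ⟨hsmono h, htw b a, htmono h⟩)
    · exact hne h
    · exact hpg (σ a) (σ b) hab (Or.inr ⟨hsmono h, htw a b, htmono h⟩)
end
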